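/- Let α ∈ ℚ \ {0,±1}, and let (t,u) ∈ ℚ² with u² = α²t⁴-(α²+1)²t²+4α², u ≠ 0 and t(t²-2) ≠ 0. Set λ₁ = -(α²+1)²/(α²-1)², λ₂ = (α²+1)²/(4α²), T = (α²-1)t/(α(t²-2)), z = (-λ₂+λ₁T²)/(-1+T²), k₁(z) = λ₁((1+λ₁)z-λ₁) and k₂(z) = λ₂((1+λ₂)z-λ₂). Then k₁(z) = ((α²+1)³t/((α²-1)²u))² and k₂(z) = ((α²+1)³(t²+2)/(8α²u))². -/

import Mathlib

theorem stmt_19 (α t u : ℚ) (h0 : α ≠ 0) (h1 : α ≠ 1) (h2 : α ≠ -1)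
    (hu : u^2 = α^2*t^4 - (α^2+1)^2*t^2 + 4*α^2) (hu0 : u ≠ 0) (ht : t*(t^2-2) ≠ 0) :
    let lam1 := -(α^2+1)^2/(α^2-1)^2
    let lam2 := (α^2+1)^2/(4*α^2)
    let T := (α^2-1)*t/(α*(t^2-2))
    T^2 ≠ 1 →
    let z := (-lam2 + lam1*T^2)/(-1 + T^2)
    lam1*((1+lam1)*z - lam1) = ((α^2+1)^3*t/((α^2-1)^2*u))^2 ∧
    lam2*((1+lam2)*z - lam2) = ((α^2+1)^3*(t^2+2)/(8*α^2*u))^2 := by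
  intro lam1 lam2 T hT z
  have ha1 : α^2 - 1 ≠ 0 := by
    intro h
    rcases mul_eq_zero.mp (show (α-1)*(α+1) = 0 by linear_combination h) with h' | h'
    · exact h1 (by linarith)
    · exact h2 (by linarith)
  have ht2 : t^2 - 2 ≠ 0 := fun h => ht (by rw [h]; ring)
  have hP : α^2*t^4 - (α^2+1)^2*t^2 + 4*α^2 ≠ 0 := hu ▸ pow_ne_zero 2 hu0
  have hP' : t^2*(α^2*t^2-(α^2+1)^2)+α^2*4 ≠ 0 := by convert hP using 1; ring
  have hkey : -1 + ((α^2-1)*t/(α*(t^2-2)))^2 = -u^2/(α*(t^2-2))^2 := by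
    field_simp
    linear_combination hu
  have hz : z = (α^2+1)^2*(t^4+4)/(4*u^2) := by
    simp only [z, T, lam1, lam2]
    rw [hkey]
    field_simp
    ring
  rw [hz]
  simp only [lam1, lam2]
  constructor
  · rw [div_pow, mul_pow, hu]
    field_simp
    linear_combination (4*(α^2+1)^2*t^2) * hu
  · rw [div_pow, show (8*α^2*u)^2 = 64*α^4*u^2 by ring, hu]
    field_simp
    ring
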